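/- Let n ≥ 2 be an integer and n′ = n/(n−1). Let g : (0,∞) → [0,∞) be nonincreasing and locally integrable, and set G(s) = (1/s) ∫₀^s g(r) dr for s > 0. Then for every s > 0: G(s^{1/n′}) ≤ (1/s) ∫₀^s G(r^{1/n′}) dr ≤ n · G(s^{1/n′}). -/

import Mathlib

open MeasureTheory Set Filter
open scoped ENNReal

noncomputable def levelAvg (g : ℝ → ℝ≥0∞) (s : ℝ) : ℝ≥0∞ :=
  (∫⁻ r in Set.Ioc (0:ℝ) s, g r) / ENNReal.ofReal s

lemma levelAvg_anti (g : ℝ → ℝ≥0∞) (hg : AntitoneOn g (Set.Ioi 0))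
    {a b : ℝ} (ha : 0 < a) (hab : a ≤ b) : levelAvg g b ≤ levelAvg g a := by
  have hb : 0 < b := lt_of_lt_of_le ha hab
  have hA0 : ENNReal.ofReal a ≠ 0 := by simp [ha]
  have hAt : ENNReal.ofReal a ≠ ⊤ := ENNReal.ofReal_ne_top
  have hB0 : ENNReal.ofReal b ≠ 0 := by simp [hb]
  have hBt : ENNReal.ofReal b ≠ ⊤ := ENNReal.ofReal_ne_top
  -- key : ∫₀^b g * A ≤ ∫₀^a g * B
  have hsplit : (∫⁻ r in Set.Ioc (0:ℝ) b, g r)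
      = (∫⁻ r in Set.Ioc (0:ℝ) a, g r) + ∫⁻ r in Set.Ioc a b, g r := by
    rw [← lintegral_union measurableSet_Ioc (Set.Ioc_disjoint_Ioc_of_le le_rfl),
      Set.Ioc_union_Ioc_eq_Ioc (le_of_lt ha) hab]
  have h1 : (∫⁻ r in Set.Ioc a b, g r) ≤ g a * ENNReal.ofReal (b - a) := by
    calc (∫⁻ r in Set.Ioc a b, g r) ≤ ∫⁻ _ in Set.Ioc a b, g a := by
          refine setLIntegral_mono' measurableSet_Ioc (fun x hx => ?_)
          exact hg ha (lt_trans ha hx.1) (le_of_lt hx.1)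
      _ = g a * ENNReal.ofReal (b - a) := by
          rw [setLIntegral_const, Real.volume_Ioc]
  have h2 : g a * ENNReal.ofReal a ≤ ∫⁻ r in Set.Ioc (0:ℝ) a, g r := by
    calc g a * ENNReal.ofReal a = ∫⁻ _ in Set.Ioc (0:ℝ) a, g a := by
          rw [setLIntegral_const, Real.volume_Ioc, sub_zero]
      _ ≤ ∫⁻ r in Set.Ioc (0:ℝ) a, g r := by
          refine setLIntegral_mono' measurableSet_Ioc (fun x hx => ?_)
          exact hg hx.1 ha hx.2
  have key : (∫⁻ r in Set.Ioc (0:ℝ) b, g r) * ENNReal.ofReal a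
      ≤ (∫⁻ r in Set.Ioc (0:ℝ) a, g r) * ENNReal.ofReal b := by
    rw [hsplit, add_mul]
    have : (∫⁻ r in Set.Ioc a b, g r) * ENNReal.ofReal a
        ≤ (∫⁻ r in Set.Ioc (0:ℝ) a, g r) * ENNReal.ofReal (b - a) := by
      calc (∫⁻ r in Set.Ioc a b, g r) * ENNReal.ofReal a
          ≤ (g a * ENNReal.ofReal (b - a)) * ENNReal.ofReal a :=
            mul_le_mul_left h1 _
        _ = (g a * ENNReal.ofReal a) * ENNReal.ofReal (b - a) := by ring
        _ ≤ (∫⁻ r in Set.Ioc (0:ℝ) a, g r) * ENNReal.ofReal (b - a) :=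
            mul_le_mul_left h2 _
    calc (∫⁻ r in Set.Ioc (0:ℝ) a, g r) * ENNReal.ofReal a
          + (∫⁻ r in Set.Ioc a b, g r) * ENNReal.ofReal a
        ≤ (∫⁻ r in Set.Ioc (0:ℝ) a, g r) * ENNReal.ofReal a
          + (∫⁻ r in Set.Ioc (0:ℝ) a, g r) * ENNReal.ofReal (b - a) :=
          add_le_add_right this _
      _ = (∫⁻ r in Set.Ioc (0:ℝ) a, g r) * (ENNReal.ofReal a + ENNReal.ofReal (b - a)) := by
          ring
      _ = (∫⁻ r in Set.Ioc (0:ℝ) a, g r) * ENNReal.ofReal b := by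
          rw [← ENNReal.ofReal_add (le_of_lt ha) (by linarith)]
          norm_num
  rw [levelAvg, levelAvg, ENNReal.div_le_iff hB0 hBt]
  have : (∫⁻ r in Set.Ioc (0:ℝ) a, g r) / ENNReal.ofReal a * ENNReal.ofReal b
      = (∫⁻ r in Set.Ioc (0:ℝ) a, g r) * ENNReal.ofReal b / ENNReal.ofReal a := by
    rw [div_eq_mul_inv, div_eq_mul_inv, mul_right_comm]
  rw [this, ENNReal.le_div_iff_mul_le (Or.inl hA0) (Or.inl hAt)]
  exact key

theorem levelAvg_power_average_equiv
    (n : ℕ) (hn : 2 ≤ n) (g : ℝ → ℝ≥0∞)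
    (hg : AntitoneOn g (Set.Ioi 0))
    (hloc : ∀ s > (0:ℝ), (∫⁻ r in Set.Ioc (0:ℝ) s, g r) < ⊤) :
    ∀ s > (0:ℝ),
      levelAvg g (s ^ (((n:ℝ)-1)/n)) ≤
        (∫⁻ r in Set.Ioc (0:ℝ) s, levelAvg g (r ^ (((n:ℝ)-1)/n))) / ENNReal.ofReal s ∧
      (∫⁻ r in Set.Ioc (0:ℝ) s, levelAvg g (r ^ (((n:ℝ)-1)/n))) / ENNReal.ofReal s ≤
        (n : ℝ≥0∞) * levelAvg g (s ^ (((n:ℝ)-1)/n)) := by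
  intro s hs
  set α : ℝ := ((n:ℝ)-1)/n with hαdef
  have hnR : (2:ℝ) ≤ (n:ℝ) := by exact_mod_cast hn
  have hn0 : (0:ℝ) < n := by linarith
  have hα0 : 0 < α := div_pos (by linarith) hn0
  have hα1 : α < 1 := by
    rw [hαdef, div_lt_one hn0]; linarith
  have h1α : 1 - α = 1/(n:ℝ) := by
    rw [hαdef]; field_simp; ring
  have hS0 : ENNReal.ofReal s ≠ 0 := by simp [hs]
  have hSt : ENNReal.ofReal s ≠ ⊤ := ENNReal.ofReal_ne_top
  have hApos : 0 < s ^ α := Real.rpow_pos_of_pos hs α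
  set C : ℝ≥0∞ := ∫⁻ r in Set.Ioc (0:ℝ) (s ^ α), g r with hCdef
  have hCt : C ≠ ⊤ := (hloc _ hApos).ne
  constructor
  · -- lower bound
    have hmono : ∀ r ∈ Set.Ioc (0:ℝ) s, levelAvg g (s ^ α) ≤ levelAvg g (r ^ α) := by
      intro r hr
      exact levelAvg_anti g hg (Real.rpow_pos_of_pos hr.1 α)
        (Real.rpow_le_rpow hr.1.le hr.2 hα0.le)
    have h1 : levelAvg g (s ^ α) * ENNReal.ofReal s
        ≤ ∫⁻ r in Set.Ioc (0:ℝ) s, levelAvg g (r ^ α) := by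
      calc levelAvg g (s ^ α) * ENNReal.ofReal s
          = ∫⁻ _ in Set.Ioc (0:ℝ) s, levelAvg g (s ^ α) := by
            rw [setLIntegral_const, Real.volume_Ioc, sub_zero]
        _ ≤ _ := setLIntegral_mono' measurableSet_Ioc hmono
    calc levelAvg g (s ^ α)
        = levelAvg g (s ^ α) * ENNReal.ofReal s / ENNReal.ofReal s := by
          rw [mul_div_assoc, ENNReal.div_self hS0 hSt, mul_one]
      _ ≤ _ := ENNReal.div_le_div_right h1 _
  · -- upper bound
    have hpt : ∀ r ∈ Set.Ioc (0:ℝ) s,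
        levelAvg g (r ^ α) ≤ C * ENNReal.ofReal (r ^ (-α)) := by
      intro r hr
      have hrα : 0 < r ^ α := Real.rpow_pos_of_pos hr.1 α
      have hsub : (∫⁻ u in Set.Ioc (0:ℝ) (r ^ α), g u) ≤ C :=
        lintegral_mono_set (Set.Ioc_subset_Ioc_right (Real.rpow_le_rpow hr.1.le hr.2 hα0.le))
      calc levelAvg g (r ^ α) ≤ C / ENNReal.ofReal (r ^ α) :=
            ENNReal.div_le_div_right hsub _
        _ = C * ENNReal.ofReal (r ^ (-α)) := by
            rw [div_eq_mul_inv, Real.rpow_neg hr.1.le, ENNReal.ofReal_inv_of_pos hrα]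
    have hint : IntegrableOn (fun r : ℝ => r ^ (-α)) (Set.Ioc 0 s) := by
      have := intervalIntegral.intervalIntegrable_rpow' (a := 0) (b := s) (r := -α) (by linarith)
      exact (intervalIntegrable_iff_integrableOn_Ioc_of_le hs.le).1 this
    have hlint : (∫⁻ r in Set.Ioc (0:ℝ) s, ENNReal.ofReal (r ^ (-α)))
        = ENNReal.ofReal (∫ r in Set.Ioc (0:ℝ) s, r ^ (-α)) := by
      rw [ofReal_integral_eq_lintegral_ofReal hint
        ((ae_restrict_iff' measurableSet_Ioc).2 (ae_of_all _
          (fun x hx => Real.rpow_nonneg hx.1.le _)))]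
    have hval : (∫ r in Set.Ioc (0:ℝ) s, r ^ (-α)) = (n:ℝ) * s ^ (1 - α) := by
      rw [← intervalIntegral.integral_of_le hs.le,
        integral_rpow (Or.inl (by linarith : (-1:ℝ) < -α))]
      rw [Real.zero_rpow (by linarith : -α + 1 ≠ 0)]
      rw [(by ring : -α + 1 = 1 - α), h1α]
      field_simp
      ring
    have hup : (∫⁻ r in Set.Ioc (0:ℝ) s, levelAvg g (r ^ α))
        ≤ (n:ℝ≥0∞) * C * ENNReal.ofReal (s ^ (1 - α)) := by
      calc (∫⁻ r in Set.Ioc (0:ℝ) s, levelAvg g (r ^ α))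
          ≤ ∫⁻ r in Set.Ioc (0:ℝ) s, C * ENNReal.ofReal (r ^ (-α)) :=
            setLIntegral_mono' measurableSet_Ioc hpt
        _ = C * ∫⁻ r in Set.Ioc (0:ℝ) s, ENNReal.ofReal (r ^ (-α)) :=
            lintegral_const_mul' _ _ hCt
        _ = C * ((n:ℝ≥0∞) * ENNReal.ofReal (s ^ (1 - α))) := by
            rw [hlint, hval, ENNReal.ofReal_mul (by positivity), ENNReal.ofReal_natCast]
        _ = (n:ℝ≥0∞) * C * ENNReal.ofReal (s ^ (1 - α)) := by ring
    have hofe : ENNReal.ofReal s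
        = ENNReal.ofReal (s ^ α) * ENNReal.ofReal (s ^ (1 - α)) := by
      rw [← ENNReal.ofReal_mul (Real.rpow_nonneg hs.le _), ← Real.rpow_add hs]
      norm_num
    have heq : (n:ℝ≥0∞) * C * ENNReal.ofReal (s ^ (1 - α)) / ENNReal.ofReal s
        = (n:ℝ≥0∞) * levelAvg g (s ^ α) := by
      rw [hofe, levelAvg, ← mul_div_assoc]
      rw [mul_comm (ENNReal.ofReal (s ^ α)) (ENNReal.ofReal (s ^ (1 - α))),
        mul_comm ((n:ℝ≥0∞) * C) (ENNReal.ofReal (s ^ (1 - α)))]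
      rw [ENNReal.mul_div_mul_left _ _ (by simp [Real.rpow_pos_of_pos hs])
        ENNReal.ofReal_ne_top]
    calc (∫⁻ r in Set.Ioc (0:ℝ) s, levelAvg g (r ^ α)) / ENNReal.ofReal s
        ≤ (n:ℝ≥0∞) * C * ENNReal.ofReal (s ^ (1 - α)) / ENNReal.ofReal s :=
          ENNReal.div_le_div_right hup _
      _ = (n:ℝ≥0∞) * levelAvg g (s ^ α) := heq
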